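/- Let G be a d-bounded degree connected graph and i a vertex with M = ∑_{r=0}^∞ ((d+1)/(d-1))^{-r} · n_r(G,i) < ∞. Then G admits a summable d-legal edge weighting; in fact, setting a = (d+1)/(d-1), choosing any monotone increasing η : ℕ → (1/a, 1) and defining z(e) = a^{-ρ(i,e)} η(ρ(i,e))/η(0), the weighting z is d-legal and ∑_{e∈E} z(e) ≤ (d/η(0)) · M. -/

import Mathlib

/-- Distance from a vertex `i` to an (undirected) edge: the minimum of the distances
to its endpoints. -/
noncomputable def edgeDist {V : Type*} (G : SimpleGraph V) (i : V) : Sym2 V → ℕ :=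
  Sym2.lift ⟨fun u v => min (G.dist i u) (G.dist i v), fun u v => min_comm _ _⟩

/-- If `M = ∑_r ((d+1)/(d-1))^{-r} n_r(G,i) < ∞`, then, with
`a = (d+1)/(d-1)` and any monotone increasing `η : ℕ → (1/a, 1)`, the weighting
`z(e) = a^{-ρ(i,e)} η(ρ(i,e))/η(0)` is a `d`-legal edge weighting with values in `(0,1]`
and `∑_{e∈E} z(e) ≤ (d/η(0))·M`; in particular `G` admits a summable `d`-legal edge
weighting. -/
theorem stmt_6 {V : Type*} (G : SimpleGraph V) [∀ v : V, Fintype (G.neighborSet v)]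
    (hconn : G.Connected)
    (d : ℕ) (hd : 3 ≤ d) (hdeg : ∀ v, G.degree v ≤ d)
    (i : V) (M : ℝ)
    (hM : HasSum (fun r : ℕ =>
      (((d : ℝ) - 1) / ((d : ℝ) + 1)) ^ r * ({j | G.dist i j = r}.ncard : ℝ)) M)
    (η : ℕ → ℝ) (hηmono : StrictMono η)
    (hηrange : ∀ r, ((d : ℝ) - 1) / ((d : ℝ) + 1) < η r ∧ η r < 1) :
    -- the explicit weighting
    letI a : ℝ := ((d : ℝ) + 1) / ((d : ℝ) - 1)
    letI z : Sym2 V → ℝ := fun e => a ^ (-(edgeDist G i e : ℤ)) * η (edgeDist G i e) / η 0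
    -- it takes values in (0,1]
    (∀ e ∈ G.edgeSet, 0 < z e ∧ z e ≤ 1) ∧
    -- it is d-legal: adjacent edges have weight ratio < a
    (∀ u v w : V, G.Adj u v → G.Adj u w → z s(u, v) / z s(u, w) < a) ∧
    -- it is summable, with the stated bound
    Summable (fun e : G.edgeSet => z (e : Sym2 V)) ∧
    (∑' e : G.edgeSet, z (e : Sym2 V)) ≤ ((d : ℝ) / η 0) * M := by
  set a : ℝ := ((d : ℝ) + 1) / ((d : ℝ) - 1) with ha
  set c : ℝ := ((d : ℝ) - 1) / ((d : ℝ) + 1) with hc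
  set z : Sym2 V → ℝ := fun e => a ^ (-(edgeDist G i e : ℤ)) * η (edgeDist G i e) / η 0 with hzdef
  have hd3 : (3:ℝ) ≤ (d:ℝ) := by exact_mod_cast hd
  have hd1 : (0:ℝ) < (d:ℝ) - 1 := by linarith
  have hd2 : (0:ℝ) < (d:ℝ) + 1 := by linarith
  have hc0 : 0 < c := div_pos hd1 hd2
  have hc1 : c < 1 := by rw [hc, div_lt_one hd2]; linarith
  have ha0 : 0 < a := div_pos hd2 hd1
  have ha1 : 1 < a := by rw [ha, lt_div_iff₀ hd1]; linarith
  have hainv : a⁻¹ = c := by rw [ha, hc, inv_div]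
  have hac : a * c = 1 := by
    rw [ha, hc]; field_simp
  have hη0 : ∀ r, 0 < η r := fun r => lt_trans hc0 (hηrange r).1
  -- the monotone decay function
  set f : ℕ → ℝ := fun r => c ^ r * η r with hfdef
  have hf_pos : ∀ r, 0 < f r := fun r => mul_pos (pow_pos hc0 r) (hη0 r)
  have hf_lt : ∀ r, f r < a * f (r + 1) := by
    intro r
    have : a * f (r + 1) = (a * c) * (c ^ r * η (r + 1)) := by
      simp only [hfdef, pow_succ]; ring
    rw [this, hac, one_mul]
    exact mul_lt_mul_of_pos_left (hηmono (Nat.lt_succ_self r)) (pow_pos hc0 r)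
  have hf_succ_lt : ∀ r, f (r + 1) < f r := by
    intro r
    have h1 : f (r + 1) = c ^ r * (c * η (r + 1)) := by rw [hfdef]; simp [pow_succ]; ring
    rw [h1]
    refine mul_lt_mul_of_pos_left ?_ (pow_pos hc0 r)
    calc c * η (r + 1) < c * 1 := by
          exact mul_lt_mul_of_pos_left (hηrange (r+1)).2 hc0
      _ = c := mul_one c
      _ < η r := (hηrange r).1
  have hf_anti : Antitone f := antitone_nat_of_succ_le fun n => (hf_succ_lt n).le
  -- rewrite z
  have hz : ∀ e, z e = f (edgeDist G i e) / η 0 := by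
    intro e
    rw [hzdef, hfdef]
    simp only [zpow_neg, zpow_natCast, ← inv_pow, hainv]
  have hz_pos : ∀ e, 0 < z e := by
    intro e; rw [hz]; exact div_pos (hf_pos _) (hη0 0)
  have hedge : ∀ u v : V, edgeDist G i s(u, v) = min (G.dist i u) (G.dist i v) := by
    intro u v; rfl
  have hadj_dist : ∀ u v : V, G.Adj u v → G.dist i v ≤ G.dist i u + 1 := by
    intro u v huv
    calc G.dist i v ≤ G.dist i u + G.dist u v := hconn.dist_triangle
      _ = G.dist i u + 1 := by rw [SimpleGraph.dist_eq_one_iff_adj.2 huv]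
  refine ⟨?_, ?_, ?_⟩
  · -- values in (0,1]
    intro e _
    refine ⟨hz_pos e, ?_⟩
    rw [hz, div_le_one (hη0 0)]
    have : f (edgeDist G i e) ≤ f 0 := hf_anti (Nat.zero_le _)
    simpa [hfdef] using this
  · -- legality
    intro u v w huv huw
    set r1 := edgeDist G i s(u, v) with hr1
    set r2 := edgeDist G i s(u, w) with hr2
    have hle : r2 ≤ r1 + 1 := by
      rw [hr1, hr2, hedge, hedge]
      have h1 : G.dist i u ≤ G.dist i v + 1 := hadj_dist v u huv.symm
      omega
    have key : f r1 < a * f r2 := by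
      calc f r1 < a * f (r1 + 1) := hf_lt r1
        _ ≤ a * f r2 := by
            exact mul_le_mul_of_nonneg_left (hf_anti hle) ha0.le
    have hq : z s(u, v) / z s(u, w) = f r1 / f r2 := by
      rw [hz, hz, ← hr1, ← hr2]
      have h0 : η 0 ≠ 0 := (hη0 0).ne'
      have h2 : f r2 ≠ 0 := (hf_pos r2).ne'
      field_simp
    rw [hq, div_lt_iff₀ (hf_pos r2)]
    exact key
  · -- summability and bound
    -- finiteness of spheres
    have hsphere : ∀ r : ℕ, {j | G.dist i j = r}.Finite := by
      intro r
      induction r with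
      | zero =>
        have : {j | G.dist i j = 0} ⊆ {i} := by
          intro j hj
          simp only [Set.mem_setOf_eq] at hj
          simp [((hconn.dist_eq_zero_iff).1 hj).symm]
        exact (Set.finite_singleton i).subset this
      | succ r ih =>
        have hsub : {j | G.dist i j = r + 1} ⊆
            ⋃ k ∈ {j | G.dist i j = r}, (G.neighborSet k) := by
          intro j hj
          simp only [Set.mem_setOf_eq] at hj
          obtain ⟨p, hp⟩ := hconn.exists_walk_length_eq_dist i j
          rw [hj] at hp
          have hne : j ≠ i := by
            intro h; subst h
            rw [SimpleGraph.dist_self] at hj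
            omega
          obtain ⟨k, hadj, q, hcons⟩ := SimpleGraph.Walk.exists_eq_cons_of_ne hne p.reverse
          have hlen : q.length = r := by
            have := congrArg SimpleGraph.Walk.length hcons
            simp [hp] at this
            omega
          have hkr : G.dist i k = r := by
            have h1 : G.dist i k ≤ r := by
              have := G.dist_le q.reverse
              simpa [hlen] using this
            have h2 : G.dist i j ≤ G.dist i k + 1 := hadj_dist k j (hadj.symm)
            omega
          exact Set.mem_biUnion (show k ∈ {j | G.dist i j = r} from hkr) (by exact hadj.symm)
        exact (Set.Finite.biUnion ih (fun k _ => (G.neighborSet k).toFinite)).subset hsub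
    -- sum over vertices
    haveI : ∀ r : ℕ, Fintype {j // G.dist i j = r} := fun r => (hsphere r).fintype
    have hfiber : ∀ r : ℕ, HasSum (fun j : {j // G.dist i j = r} => c ^ (G.dist i (j : V)))
        (c ^ r * ({j | G.dist i j = r}.ncard : ℝ)) := by
      intro r
      have h1 : (fun j : {j // G.dist i j = r} => c ^ (G.dist i (j : V))) = fun _ => c ^ r := by
        funext j; rw [j.2]
      rw [h1]
      have h2 := hasSum_fintype (fun _ : {j // G.dist i j = r} => (c : ℝ) ^ r)
      convert h2 using 1
      rw [Finset.sum_const, nsmul_eq_mul]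
      have hcard : (Finset.univ : Finset {j // G.dist i j = r}).card
          = {j | G.dist i j = r}.ncard := by
        rw [Finset.card_univ, ← Nat.card_coe_set_eq]
        exact Nat.card_eq_fintype_card.symm
      rw [hcard]; ring
    have hVsig : Summable (fun p : (Σ r : ℕ, {j // G.dist i j = r}) => c ^ (G.dist i (p.2 : V))) := by
      rw [summable_sigma_of_nonneg (fun p => (pow_pos hc0 _).le)]
      refine ⟨fun r => (hfiber r).summable, ?_⟩
      have h3 : (fun r : ℕ => ∑' j : {j // G.dist i j = r}, c ^ (G.dist i (j : V)))
          = fun r => c ^ r * ({j | G.dist i j = r}.ncard : ℝ) := by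
        funext r; exact (hfiber r).tsum_eq
      rw [h3]; exact hM.summable
    have hVsum : HasSum (fun j : V => c ^ (G.dist i j)) M := by
      have hts : (∑' p : (Σ r : ℕ, {j // G.dist i j = r}), c ^ (G.dist i (p.2 : V))) = M := by
        rw [Summable.tsum_sigma hVsig]
        have h3 : (fun r : ℕ => ∑' j : {j // G.dist i j = r}, c ^ (G.dist i (j : V)))
            = fun r => c ^ r * ({j | G.dist i j = r}.ncard : ℝ) := by
          funext r; exact (hfiber r).tsum_eq
        rw [h3]; exact hM.tsum_eq
      have h4 := hVsig.hasSum
      rw [hts] at h4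
      exact (Equiv.sigmaFiberEquiv (fun j => G.dist i j)).hasSum_iff.mp h4
    -- sum over (vertex, neighbor) pairs
    set g : (Σ j : V, G.neighborSet j) → ℝ := fun p => c ^ (G.dist i p.1) / η 0 with hgdef
    have hg_nonneg : ∀ p, 0 ≤ g p := fun p => (div_pos (pow_pos hc0 _) (hη0 0)).le
    have hgfiber : ∀ j : V, HasSum (fun k : G.neighborSet j => g ⟨j, k⟩)
        ((G.degree j : ℝ) * (c ^ (G.dist i j) / η 0)) := by
      intro j
      have h2 := hasSum_fintype (fun _ : G.neighborSet j => c ^ (G.dist i j) / η 0)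
      convert h2 using 1
      rw [Finset.sum_const, nsmul_eq_mul, Finset.card_univ,
        SimpleGraph.card_neighborSet_eq_degree]
    have hbig : Summable (fun j : V => (d : ℝ) * (c ^ (G.dist i j) / η 0)) :=
      ((hVsum.summable.div_const (η 0)).mul_left _)
    have houter_le : ∀ j : V, (G.degree j : ℝ) * (c ^ (G.dist i j) / η 0)
        ≤ (d : ℝ) * (c ^ (G.dist i j) / η 0) := by
      intro j
      have : (G.degree j : ℝ) ≤ (d : ℝ) := by exact_mod_cast hdeg j
      exact mul_le_mul_of_nonneg_right this (div_pos (pow_pos hc0 _) (hη0 0)).le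
    have houter_summ : Summable (fun j : V => (G.degree j : ℝ) * (c ^ (G.dist i j) / η 0)) :=
      Summable.of_nonneg_of_le
        (fun j => mul_nonneg (Nat.cast_nonneg _) (div_pos (pow_pos hc0 _) (hη0 0)).le)
        houter_le hbig
    have hgsumm : Summable g := by
      rw [summable_sigma_of_nonneg hg_nonneg]
      refine ⟨fun j => (hgfiber j).summable, ?_⟩
      have h3 : (fun j : V => ∑' k : G.neighborSet j, g ⟨j, k⟩)
          = fun j => (G.degree j : ℝ) * (c ^ (G.dist i j) / η 0) := by
        funext j; exact (hgfiber j).tsum_eq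
      rw [h3]; exact houter_summ
    have hgts : (∑' p, g p) ≤ ((d : ℝ) / η 0) * M := by
      rw [Summable.tsum_sigma hgsumm]
      have h3 : (fun j : V => ∑' k : G.neighborSet j, g ⟨j, k⟩)
          = fun j => (G.degree j : ℝ) * (c ^ (G.dist i j) / η 0) := by
        funext j; exact (hgfiber j).tsum_eq
      calc (∑' j : V, ∑' k : G.neighborSet j, g ⟨j, k⟩)
          = ∑' j : V, (G.degree j : ℝ) * (c ^ (G.dist i j) / η 0) := by rw [h3]
        _ ≤ ∑' j : V, (d : ℝ) * (c ^ (G.dist i j) / η 0) :=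
            Summable.tsum_le_tsum houter_le houter_summ hbig
        _ = ((d : ℝ) / η 0) * M := by
            have h5 : (fun j : V => (d : ℝ) * (c ^ (G.dist i j) / η 0))
                = fun j => ((d : ℝ) / η 0) * c ^ (G.dist i j) := by
              funext j; field_simp
            rw [h5, tsum_mul_left, hVsum.tsum_eq]
    -- injection from edges
    have hex : ∀ e : G.edgeSet, ∃ p : Σ j : V, G.neighborSet j,
        (e : Sym2 V) = s(p.1, (p.2 : V)) ∧ G.dist i p.1 = edgeDist G i (e : Sym2 V) := by
      rintro ⟨e, he⟩
      induction e using Sym2.ind with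
      | _ u v =>
        rw [SimpleGraph.mem_edgeSet] at he
        rcases le_total (G.dist i u) (G.dist i v) with h | h
        · exact ⟨⟨u, ⟨v, he⟩⟩, rfl, by rw [hedge]; exact (min_eq_left h).symm⟩
        · refine ⟨⟨v, ⟨u, he.symm⟩⟩, ?_, ?_⟩
          · exact Sym2.eq_swap.symm
          · rw [hedge]; exact (min_eq_right h).symm
    choose F hF1 hF2 using hex
    have hFinj : Function.Injective F := by
      intro e1 e2 h12
      apply Subtype.ext
      rw [hF1 e1, hF1 e2, h12]
    have hcomp : ∀ e : G.edgeSet, z (e : Sym2 V) ≤ g (F e) := by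
      intro e
      rw [hz]
      show f (edgeDist G i (e : Sym2 V)) / η 0 ≤ c ^ (G.dist i (F e).1) / η 0
      rw [hF2 e]
      gcongr
      · exact (hη0 0).le
      · calc f (edgeDist G i (e : Sym2 V))
            = c ^ (edgeDist G i (e : Sym2 V)) * η (edgeDist G i (e : Sym2 V)) := rfl
          _ ≤ c ^ (edgeDist G i (e : Sym2 V)) * 1 := by
              exact mul_le_mul_of_nonneg_left (hηrange _).2.le (pow_nonneg hc0.le _)
          _ = c ^ (edgeDist G i (e : Sym2 V)) := mul_one _
    have hzsumm : Summable (fun e : G.edgeSet => z (e : Sym2 V)) :=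
      Summable.of_nonneg_of_le (fun e => (hz_pos _).le) hcomp (hgsumm.comp_injective hFinj)
    refine ⟨hzsumm, ?_⟩
    calc (∑' e : G.edgeSet, z (e : Sym2 V))
        ≤ ∑' p, g p := Summable.tsum_le_tsum_of_inj F hFinj (fun p _ => hg_nonneg p) hcomp hzsumm hgsumm
      _ ≤ ((d : ℝ) / η 0) * M := hgts
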